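/- If a and b are atoms with Av(a) Wilf-equivalent to Av(b), then for all arch systems P and Q, Av(PaQ) is Wilf-equivalent to Av(PbQ). -/

import Mathlib

/-- Plane forests, modelling non-crossing arch systems: `node c r` is an atom
(an arch over the contents `c`) followed by the rest of the forest `r`. -/
inductive PF : Type
  | nil : PF
  | node : PF → PF → PF
  deriving DecidableEq

namespace PF

/-- number of arches (nodes) -/
def size : PF → ℕ
  | nil => 0
  | node c r => 1 + c.size + r.size

/-- concatenation of arch systems -/
def append : PF → PF → PF
  | nil, q => q
  | node c r, q => node c (r.append q)

instance : Append PF := ⟨PF.append⟩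

/-- an atom: a nonempty arch system with a single outermost arch -/
def IsAtom (a : PF) : Prop := ∃ c, a = node c nil

/-- an atom or the empty arch system -/
def AtomOrNil (a : PF) : Prop := a = nil ∨ IsAtom a

/-- One-step arch deletion: `Del X Y` means `Y` is obtained from `X` by deleting one arch
(the contents of a deleted arch are spliced in its place). -/
inductive Del : PF → PF → Prop
  | root (c r : PF) : Del (node c r) (c ++ r)
  | inside {c c' : PF} (r : PF) : Del c c' → Del (node c r) (node c' r)
  | rest {r r' : PF} (c : PF) : Del r r' → Del (node c r) (node c r')

/-- `Contains X A` : `A` is a substructure (subsystem) of `X`. -/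
def Contains (X A : PF) : Prop := Relation.ReflTransGen Del X A

/-- the class of arch systems avoiding `A` -/
def Av (A : PF) : Set PF := {X | ¬ Contains X A}

/-- Wilf-equivalence: same counting sequence by number of arches. -/
def WilfEq (A B : PF) : Prop :=
  ∀ n, Set.ncard {X | X ∈ Av A ∧ X.size = n} = Set.ncard {X | X ∈ Av B ∧ X.size = n}

/-- the generating function of `Av A`, counting by number of arches -/
noncomputable def F (A : PF) : PowerSeries ℚ :=
  PowerSeries.mk fun n => (Set.ncard {X | X ∈ Av A ∧ X.size = n} : ℚ)

end PF

/-- concatenation of a list of arch systems -/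
def concatList (L : List PF) : PF := L.foldr (· ++ ·) PF.nil

/-- The equivalence relation `∼` whose classes are cohorts: the finest equivalence
relation satisfying the four closure rules. -/
inductive Sim : PF → PF → Prop
  | refl (A : PF) : Sim A A
  | symm {A B : PF} : Sim A B → Sim B A
  | trans {A B C : PF} : Sim A B → Sim B C → Sim A C
  | arch {A B : PF} : Sim A B → Sim (PF.node A PF.nil) (PF.node B PF.nil)
  | subst {a b : PF} (P Q : PF) : PF.AtomOrNil a → PF.AtomOrNil b → Sim a b →
      Sim (P ++ a ++ Q) (P ++ b ++ Q)
  | comm {a b : PF} (P Q : PF) : PF.AtomOrNil a → PF.AtomOrNil b →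
      Sim (P ++ a ++ b ++ Q) (P ++ b ++ a ++ Q)
  | rot {a b c : PF} : PF.AtomOrNil a → PF.AtomOrNil b → PF.AtomOrNil c →
      Sim (a ++ PF.node (b ++ c) PF.nil) (PF.node (a ++ b) PF.nil ++ c)

/-- the nest of `n` nested arches -/
def nest : ℕ → PF
  | 0 => PF.nil
  | n + 1 => PF.node (nest n) PF.nil

/-- the `n`-th Motzkin number -/
def motzkin (n : ℕ) : ℕ := ∑ k ∈ Finset.range (n + 1), n.choose (2 * k) * catalan k

/-- the truncated continued fractions `C_n` of the Catalan generating function -/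
noncomputable def Cfun : ℕ → PowerSeries ℚ
  | 0 => 1
  | n + 1 => (1 - PowerSeries.X * Cfun n)⁻¹

/-- a balanced parenthesis word (Dyck word): `true` = opening, `false` = closing -/
def BalancedW (w : List Bool) : Prop :=
  w.count true = w.count false ∧ ∀ p : List Bool, p <+: w → p.count false ≤ p.count true

/-- the height of a Dyck path -/
def wheight (w : List Bool) : ℕ :=
  (w.inits.map fun p => p.count true - p.count false).foldr max 0

/-- One-step deletion of a matched pair of parentheses (an arch) in a word. -/
inductive WDel : List Bool → List Bool → Prop
  | mk (x y z : List Bool) : BalancedW y →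
      WDel (x ++ [true] ++ y ++ [false] ++ z) (x ++ y ++ z)

/-- `l` avoids the pattern 231 -/
def Avoids231 (l : List ℕ) : Prop := ¬ ∃ a b c : ℕ, [b, c, a].Sublist l ∧ a < b ∧ b < c

/-- `p` and `s` are order-isomorphic sequences -/
def OrdIso (p s : List ℕ) : Prop :=
  p.length = s.length ∧ ∀ i j : ℕ, i < p.length → j < p.length →
    (p.getD i 0 < p.getD j 0 ↔ s.getD i 0 < s.getD j 0)

namespace PF

@[simp] theorem append_eq (X Y : PF) : PF.append X Y = X ++ Y := rfl

@[simp] theorem nil_append (X : PF) : PF.nil ++ X = X := rfl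
@[simp] theorem node_append (c r X : PF) : PF.node c r ++ X = PF.node c (r ++ X) := rfl

@[simp] theorem append_nil (X : PF) : X ++ PF.nil = X := by
  induction X with
  | nil => rfl
  | node c r ihc ihr => rw [node_append, ihr]

theorem append_assoc (X Y Z : PF) : (X ++ Y) ++ Z = X ++ (Y ++ Z) := by
  induction X with
  | nil => rfl
  | node c r ihc ihr => simp [ihr]

theorem size_append (X Y : PF) : (X ++ Y).size = X.size + Y.size := by
  induction X with
  | nil => simp [size]
  | node c r ihc ihr => simp [size, append_eq, ihr]; omega

theorem append_eq_nil {X Y : PF} (h : X ++ Y = PF.nil) : X = PF.nil ∧ Y = PF.nil := by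
  cases X with
  | nil => exact ⟨rfl, h⟩
  | node c r => simp at h

theorem append_eq_append {A B C D : PF} (h : A ++ B = C ++ D) :
    (∃ W, C = A ++ W ∧ B = W ++ D) ∨ (∃ W, A = C ++ W ∧ D = W ++ B) := by
  induction A generalizing C with
  | nil => exact Or.inl ⟨C, rfl, h⟩
  | node a1 a2 ih1 ih2 =>
    cases C with
    | nil => exact Or.inr ⟨PF.node a1 a2, rfl, h.symm⟩
    | node c1 c2 =>
      rw [node_append, node_append, PF.node.injEq] at h
      obtain ⟨h1, h2⟩ := h
      subst h1
      rcases ih2 h2 with ⟨W, hW1, hW2⟩ | ⟨W, hW1, hW2⟩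
      · exact Or.inl ⟨W, by rw [hW1]; rfl, hW2⟩
      · exact Or.inr ⟨W, by rw [hW1]; rfl, hW2⟩

theorem del_append_left {X X' : PF} (h : Del X X') (Y : PF) : Del (X ++ Y) (X' ++ Y) := by
  induction h with
  | root c r => rw [node_append, append_assoc]; exact Del.root c (r ++ Y)
  | inside r hd ih => exact Del.inside (r ++ Y) hd
  | rest c hd ih => exact Del.rest c ih

theorem del_append_right {Y Y' : PF} (h : Del Y Y') (X : PF) : Del (X ++ Y) (X ++ Y') := by
  induction X with
  | nil => exact h
  | node c r ihc ihr => exact Del.rest c ihr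

theorem del_of_append {X Y Z : PF} (h : Del (X ++ Y) Z) :
    (∃ X', Del X X' ∧ Z = X' ++ Y) ∨ (∃ Y', Del Y Y' ∧ Z = X ++ Y') := by
  induction X generalizing Z with
  | nil => exact Or.inr ⟨Z, h, rfl⟩
  | node c r ihc ihr =>
    rw [node_append] at h
    cases h with
    | root _ _ => exact Or.inl ⟨c ++ r, Del.root c r, (append_assoc c r Y).symm⟩
    | inside _ hd => exact Or.inl ⟨_, Del.inside r hd, rfl⟩
    | rest _ hd =>
      rcases ihr hd with ⟨r', hr', rfl⟩ | ⟨Y', hY', rfl⟩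
      · exact Or.inl ⟨PF.node c r', Del.rest c hr', rfl⟩
      · exact Or.inr ⟨Y', hY', rfl⟩

theorem Contains.rfl {X : PF} : Contains X X := Relation.ReflTransGen.refl

theorem Contains.trans' {X Y Z : PF} (h1 : Contains X Y) (h2 : Contains Y Z) : Contains X Z :=
  Relation.ReflTransGen.trans h1 h2

theorem contains_of_del {X Y : PF} (h : Del X Y) : Contains X Y :=
  Relation.ReflTransGen.single h

theorem contains_append_left {X X' : PF} (h : Contains X X') (Y : PF) :
    Contains (X ++ Y) (X' ++ Y) :=
  Relation.ReflTransGen.lift (· ++ Y) (fun _ _ hd => del_append_left hd Y) _ _ h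

theorem contains_append_right {Y Y' : PF} (h : Contains Y Y') (X : PF) :
    Contains (X ++ Y) (X ++ Y') :=
  Relation.ReflTransGen.lift (X ++ ·) (fun _ _ hd => del_append_right hd X) _ _ h

theorem contains_append_mono {X X' Y Y' : PF} (h1 : Contains X X') (h2 : Contains Y Y') :
    Contains (X ++ Y) (X' ++ Y') :=
  (contains_append_left h1 Y).trans' (contains_append_right h2 X')

theorem contains_nil (X : PF) : Contains X PF.nil := by
  induction X with
  | nil => exact Contains.rfl
  | node c r ihc ihr =>
    exact ((contains_of_del (Del.root c r)).trans' (contains_append_mono ihc ihr))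

theorem contains_node_mono {c c' r r' : PF} (h1 : Contains c c') (h2 : Contains r r') :
    Contains (PF.node c r) (PF.node c' r') := by
  have s1 : Contains (PF.node c r) (PF.node c' r) :=
    Relation.ReflTransGen.lift (PF.node · r) (fun _ _ hd => Del.inside r hd) _ _ h1
  have s2 : Contains (PF.node c' r) (PF.node c' r') :=
    Relation.ReflTransGen.lift (PF.node c' ·) (fun _ _ hd => Del.rest c' hd) _ _ h2
  exact s1.trans' s2

theorem nil_contains {F : PF} (h : Contains PF.nil F) : F = PF.nil := by
  rcases Relation.ReflTransGen.cases_head h with rfl | ⟨Z, hd, _⟩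
  · rfl
  · cases hd

theorem contains_append_self_left (X Y : PF) : Contains (X ++ Y) X := by
  have := contains_append_mono (Contains.rfl (X := X)) (contains_nil Y)
  rwa [append_nil] at this

theorem contains_append_self_right (X Y : PF) : Contains (X ++ Y) Y := by
  exact contains_append_mono (contains_nil X) (Contains.rfl (X := Y))

theorem node_contains_contents (c r : PF) : Contains (PF.node c r) c :=
  (contains_of_del (Del.root c r)).trans' (contains_append_self_left c r)

theorem node_contains_rest (c r : PF) : Contains (PF.node c r) r :=
  (contains_of_del (Del.root c r)).trans' (contains_append_self_right c r)

theorem contains_append_iff {X Y F : PF} :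
    Contains (X ++ Y) F ↔ ∃ F₁ F₂, F = F₁ ++ F₂ ∧ Contains X F₁ ∧ Contains Y F₂ := by
  constructor
  · intro h
    have key : ∀ {Z : PF}, Contains Z F → ∀ X Y : PF, Z = X ++ Y →
        ∃ F₁ F₂, F = F₁ ++ F₂ ∧ Contains X F₁ ∧ Contains Y F₂ := by
      intro Z h
      induction h using Relation.ReflTransGen.head_induction_on with
      | refl => exact fun X Y hXY => ⟨X, Y, hXY, Contains.rfl, Contains.rfl⟩
      | head hstep hrest ih =>
        rintro X Y rfl
        rcases del_of_append hstep with ⟨X', hX', rfl⟩ | ⟨Y', hY', rfl⟩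
        · obtain ⟨F₁, F₂, hF, h1, h2⟩ := ih X' Y rfl
          exact ⟨F₁, F₂, hF, (contains_of_del hX').trans' h1, h2⟩
        · obtain ⟨F₁, F₂, hF, h1, h2⟩ := ih X Y' rfl
          exact ⟨F₁, F₂, hF, h1, (contains_of_del hY').trans' h2⟩
    exact key h X Y rfl
  · rintro ⟨F₁, F₂, rfl, h1, h2⟩
    exact contains_append_mono h1 h2

theorem contains_node_iff {c r F : PF} :
    Contains (PF.node c r) F ↔ Contains (c ++ r) F ∨
      ∃ F₁ F₂, F = PF.node F₁ F₂ ∧ Contains c F₁ ∧ Contains r F₂ := by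
  constructor
  · intro h
    have key : ∀ {Z : PF}, Contains Z F → ∀ c r : PF, Z = PF.node c r →
        Contains (c ++ r) F ∨ ∃ F₁ F₂, F = PF.node F₁ F₂ ∧ Contains c F₁ ∧ Contains r F₂ := by
      intro Z h
      induction h using Relation.ReflTransGen.head_induction_on with
      | refl => exact fun c r hcr => Or.inr ⟨c, r, hcr, Contains.rfl, Contains.rfl⟩
      | head hstep hrest ih =>
        rintro c r rfl
        cases hstep with
        | root _ _ => exact Or.inl hrest
        | inside _ hd =>
          rcases ih _ _ rfl with h1 | ⟨F₁, F₂, hF, h1, h2⟩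
          · exact Or.inl ((contains_append_left (contains_of_del hd) r).trans' h1)
          · exact Or.inr ⟨F₁, F₂, hF, (contains_of_del hd).trans' h1, h2⟩
        | rest _ hd =>
          rcases ih _ _ rfl with h1 | ⟨F₁, F₂, hF, h1, h2⟩
          · exact Or.inl ((contains_append_right (contains_of_del hd) c).trans' h1)
          · exact Or.inr ⟨F₁, F₂, hF, h1, (contains_of_del hd).trans' h2⟩
    exact key h c r rfl
  · rintro (h | ⟨F₁, F₂, rfl, h1, h2⟩)
    · exact (contains_of_del (Del.root c r)).trans' h
    · exact contains_node_mono h1 h2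

theorem atom_contains_contents (α : PF) : Contains (PF.node α PF.nil) α := by
  have := contains_of_del (Del.root α PF.nil)
  rwa [append_nil] at this

end PF
namespace PF

attribute [local instance] Classical.propDecidable

/-- The replacement map with context arguments. -/
noncomputable def Phi (P Q : PF) (g : PF → PF) : PF → PF → PF → PF
  | _, _, PF.nil => PF.nil
  | L, R, PF.node c r =>
    if Contains L P ∧ Contains (r ++ R) Q then
      PF.node (g c) (Phi P Q g (L ++ PF.node c PF.nil) R r)
    else
      PF.node (Phi P Q g L (r ++ R) c) (Phi P Q g (L ++ PF.node c PF.nil) R r)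

/-- The occurrence predicate: some node of `X`, eligible w.r.t. contexts `L`, `R`,
has contents containing `α`. -/
def Bad (P Q α : PF) : PF → PF → PF → Prop
  | _, _, PF.nil => False
  | L, R, PF.node c r =>
    (Contains L P ∧ Contains (r ++ R) Q ∧ Contains c α) ∨
      Bad P Q α L (r ++ R) c ∨ Bad P Q α (L ++ PF.node c PF.nil) R r

variable {P Q : PF}

theorem contains_P_ext {L W : PF} (h : Contains L P) : Contains (L ++ W) P :=
  (contains_append_self_left L W).trans' h

theorem contains_Q_ext {R W : PF} (h : Contains R Q) : Contains (W ++ R) Q :=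
  (contains_append_self_right W R).trans' h

theorem phi_size {g : PF → PF} (hg : ∀ c, (g c).size = c.size) :
    ∀ (X L R : PF), (Phi P Q g L R X).size = X.size := by
  intro X
  induction X with
  | nil => intro L R; rfl
  | node c r ihc ihr =>
    intro L R
    rw [Phi]
    by_cases h : Contains L P ∧ Contains (r ++ R) Q
    · rw [if_pos h]; simp [size, hg c, ihr]
    · rw [if_neg h]; simp [size, ihc, ihr]

theorem phi_P (g : PF → PF) :
    ∀ (X L R : PF), Phi P Q g L R X = X ∨
      (Contains (L ++ X) P ∧ Contains (L ++ Phi P Q g L R X) P) := by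
  intro X
  induction X with
  | nil => intro L R; exact Or.inl rfl
  | node c r ihc ihr =>
    intro L R
    rw [Phi]
    by_cases h : Contains L P ∧ Contains (r ++ R) Q
    · rw [if_pos h]
      exact Or.inr ⟨contains_P_ext h.1, contains_P_ext h.1⟩
    · rw [if_neg h]
      rcases ihc L (r ++ R) with hc | ⟨hc1, hc2⟩
      · rcases ihr (L ++ PF.node c PF.nil) R with hr | ⟨hr1, hr2⟩
        · rw [hc, hr]; exact Or.inl rfl
        · rw [hc]
          refine Or.inr ⟨?_, ?_⟩
          · rwa [append_assoc, node_append, nil_append] at hr1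
          · rwa [append_assoc, node_append, nil_append] at hr2
      · refine Or.inr ⟨?_, ?_⟩
        · exact ((contains_append_right (node_contains_contents c r) L).trans' hc1)
        · exact ((contains_append_right (node_contains_contents _ _) L).trans' hc2)

theorem phi_Q (g : PF → PF) :
    ∀ (X L R : PF), Phi P Q g L R X = X ∨
      (Contains (X ++ R) Q ∧ Contains (Phi P Q g L R X ++ R) Q) := by
  intro X
  induction X with
  | nil => intro L R; exact Or.inl rfl
  | node c r ihc ihr =>
    intro L R
    rw [Phi]
    by_cases h : Contains L P ∧ Contains (r ++ R) Q
    · rw [if_pos h]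
      refine Or.inr ⟨?_, ?_⟩
      · rw [node_append]
        exact (node_contains_rest c (r ++ R)).trans' h.2
      · rw [node_append]
        rcases ihr (L ++ PF.node c PF.nil) R with hr | ⟨hr1, hr2⟩
        · rw [hr]; exact (node_contains_rest _ (r ++ R)).trans' h.2
        · exact (node_contains_rest _ _).trans' hr2
    · rw [if_neg h]
      rcases ihc L (r ++ R) with hc | ⟨hc1, hc2⟩
      · rcases ihr (L ++ PF.node c PF.nil) R with hr | ⟨hr1, hr2⟩
        · rw [hc, hr]; exact Or.inl rfl
        · refine Or.inr ⟨?_, ?_⟩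
          · rw [node_append]; exact (node_contains_rest _ _).trans' hr1
          · rw [node_append]; exact (node_contains_rest _ _).trans' hr2
      · refine Or.inr ⟨?_, ?_⟩
        · rw [node_append]; exact (contains_of_del (Del.root c (r ++ R))).trans' hc1
        · rw [node_append]
          rcases ihr (L ++ PF.node c PF.nil) R with hr | ⟨hr1, hr2⟩
          · rw [hr]; exact (contains_of_del (Del.root _ (r ++ R))).trans' hc2
          · exact (node_contains_rest _ _).trans' hr2

theorem phi_ctxL (g : PF → PF) :
    ∀ (X : PF) {L₁ L₂ : PF} (R : PF),
      (∀ W, Contains (L₁ ++ W) P ↔ Contains (L₂ ++ W) P) →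
      Phi P Q g L₁ R X = Phi P Q g L₂ R X := by
  intro X
  induction X with
  | nil => intros; rfl
  | node c r ihc ihr =>
    intro L₁ L₂ R hL
    have h0 : Contains L₁ P ↔ Contains L₂ P := by
      have := hL PF.nil; rwa [append_nil, append_nil] at this
    have hL' : ∀ W, Contains ((L₁ ++ PF.node c PF.nil) ++ W) P ↔
        Contains ((L₂ ++ PF.node c PF.nil) ++ W) P := by
      intro W
      rw [append_assoc, append_assoc]
      exact hL _
    rw [Phi, Phi]
    by_cases h : Contains L₁ P ∧ Contains (r ++ R) Q
    · rw [if_pos h, if_pos ⟨h0.1 h.1, h.2⟩, ihr R hL']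
    · rw [if_neg h, if_neg (by rw [← h0]; exact h), ihc (r ++ R) hL, ihr R hL']

theorem phi_ctxR (g : PF → PF) :
    ∀ (X : PF) (L : PF) {R₁ R₂ : PF},
      (∀ W, Contains (W ++ R₁) Q ↔ Contains (W ++ R₂) Q) →
      Phi P Q g L R₁ X = Phi P Q g L R₂ X := by
  intro X
  induction X with
  | nil => intros; rfl
  | node c r ihc ihr =>
    intro L R₁ R₂ hR
    have hR' : ∀ W, Contains (W ++ (r ++ R₁)) Q ↔ Contains (W ++ (r ++ R₂)) Q := by
      intro W
      rw [← append_assoc, ← append_assoc]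
      exact hR _
    rw [Phi, Phi]
    by_cases h : Contains L P ∧ Contains (r ++ R₁) Q
    · rw [if_pos h, if_pos ⟨h.1, (hR r).1 h.2⟩, ihr _ hR]
    · rw [if_neg h, if_neg (by rw [show (Contains L P ∧ Contains (r ++ R₂) Q) = _ from propext (and_congr_right fun _ => (hR r).symm)]; exact h),
        ihc L hR', ihr _ hR]

theorem phi_phi (g g' : PF → PF) (hgg : ∀ c, g' (g c) = c) :
    ∀ (X L R : PF), Phi P Q g' L R (Phi P Q g L R X) = X := by
  intro X
  induction X with
  | nil => intros; rfl
  | node c r ihc ihr =>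
    intro L R
    by_cases h : Contains L P ∧ Contains (r ++ R) Q
    · rw [Phi, if_pos h]
      have hr' : Contains (Phi P Q g (L ++ PF.node c PF.nil) R r ++ R) Q := by
        rcases phi_Q g r (L ++ PF.node c PF.nil) R with hr | ⟨_, hr2⟩
        · rw [hr]; exact h.2
        · exact hr2
      rw [Phi, if_pos ⟨h.1, hr'⟩, hgg c]
      congr 1
      have hctx : ∀ W, Contains ((L ++ PF.node (g c) PF.nil) ++ W) P ↔
          Contains ((L ++ PF.node c PF.nil) ++ W) P := by
        intro W
        constructor <;> intro _
        · rw [append_assoc]; exact contains_P_ext h.1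
        · rw [append_assoc]; exact contains_P_ext h.1
      rw [phi_ctxL g' _ R hctx, ihr]
    · rw [Phi, if_neg h]
      have hQiff : ∀ W, Contains (W ++ (Phi P Q g (L ++ PF.node c PF.nil) R r ++ R)) Q ↔
          Contains (W ++ (r ++ R)) Q := by
        intro W
        rcases phi_Q g r (L ++ PF.node c PF.nil) R with hr | ⟨hr1, hr2⟩
        · rw [hr]
        · constructor <;> intro _
          · exact contains_Q_ext hr1
          · exact contains_Q_ext hr2
      have hPiff : ∀ W, Contains ((L ++ PF.node (Phi P Q g L (r ++ R) c) PF.nil) ++ W) P ↔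
          Contains ((L ++ PF.node c PF.nil) ++ W) P := by
        intro W
        rcases phi_P g c L (r ++ R) with hc | ⟨hc1, hc2⟩
        · rw [hc]
        · have key : ∀ d : PF, Contains (L ++ d) P →
              Contains ((L ++ PF.node d PF.nil) ++ W) P := by
            intro d hd
            rw [append_assoc, node_append, nil_append]
            exact (contains_append_right (node_contains_contents d W) L).trans' hd
          constructor <;> intro _
          · exact key c hc1
          · exact key _ hc2
      have hbad : ¬ (Contains L P ∧
          Contains (Phi P Q g (L ++ PF.node c PF.nil) R r ++ R) Q) := by
        rintro ⟨h1, h2⟩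
        rcases phi_Q g r (L ++ PF.node c PF.nil) R with hr | ⟨hr1, _⟩
        · rw [hr] at h2; exact h ⟨h1, h2⟩
        · exact h ⟨h1, hr1⟩
      rw [Phi, if_neg hbad]
      congr 1
      · rw [phi_ctxR g' _ L hQiff, ihc]
      · rw [phi_ctxL g' _ R hPiff, ihr]

end PF
namespace PF

variable {P Q α β : PF}

theorem bad_ctxL :
    ∀ (X : PF) {L₁ L₂ : PF} (R : PF),
      (∀ W, Contains (L₁ ++ W) P ↔ Contains (L₂ ++ W) P) →
      (Bad P Q α L₁ R X ↔ Bad P Q α L₂ R X) := by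
  intro X
  induction X with
  | nil => intro L₁ L₂ R _; exact Iff.rfl
  | node c r ihc ihr =>
    intro L₁ L₂ R hL
    have h0 : Contains L₁ P ↔ Contains L₂ P := by
      have := hL PF.nil; rwa [append_nil, append_nil] at this
    have hL' : ∀ W, Contains ((L₁ ++ PF.node c PF.nil) ++ W) P ↔
        Contains ((L₂ ++ PF.node c PF.nil) ++ W) P := by
      intro W; rw [append_assoc, append_assoc]; exact hL _
    show _ ∨ _ ∨ _ ↔ _ ∨ _ ∨ _
    rw [ihc (r ++ R) hL, ihr R hL', h0]

theorem bad_ctxR :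
    ∀ (X : PF) (L : PF) {R₁ R₂ : PF},
      (∀ W, Contains (W ++ R₁) Q ↔ Contains (W ++ R₂) Q) →
      (Bad P Q α L R₁ X ↔ Bad P Q α L R₂ X) := by
  intro X
  induction X with
  | nil => intros; exact Iff.rfl
  | node c r ihc ihr =>
    intro L R₁ R₂ hR
    have hR' : ∀ W, Contains (W ++ (r ++ R₁)) Q ↔ Contains (W ++ (r ++ R₂)) Q := by
      intro W; rw [← append_assoc, ← append_assoc]; exact hR _
    show _ ∨ _ ∨ _ ↔ _ ∨ _ ∨ _
    rw [ihc L hR', ihr (L ++ PF.node c PF.nil) hR, hR r]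

theorem bad_contains : ∀ (X L R : PF), Bad P Q α L R X → Contains X (PF.node α PF.nil) := by
  intro X
  induction X with
  | nil => intro L R h; exact h.elim
  | node c r ihc ihr =>
    rintro L R (⟨_, _, hc⟩ | hb | hb)
    · exact contains_node_mono hc (contains_nil r)
    · exact (node_contains_contents c r).trans' (ihc _ _ hb)
    · exact (node_contains_rest c r).trans' (ihr _ _ hb)

theorem bad_iff : ∀ (X L R : PF), Bad P Q α L R X ↔
    ∃ P₁ P₂ Q₁ Q₂ : PF, P = P₁ ++ P₂ ∧ Q = Q₁ ++ Q₂ ∧ Contains L P₁ ∧ Contains R Q₂ ∧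
      Contains X ((P₂ ++ PF.node α PF.nil) ++ Q₁) := by
  intro X
  induction X with
  | nil =>
    intro L R
    simp only [Bad, false_iff]
    rintro ⟨P₁, P₂, Q₁, Q₂, hP, hQ, hL, hR, hX⟩
    have := nil_contains hX
    obtain ⟨h1, -⟩ := append_eq_nil this
    obtain ⟨-, h2⟩ := append_eq_nil h1
    simp at h2
  | node c r ihc ihr =>
    intro L R
    constructor
    · rintro (⟨hLP, hrRQ, hcα⟩ | hb | hb)
      · obtain ⟨Q₁, Q₂, hQ, hr, hR⟩ := contains_append_iff.1 hrRQ
        refine ⟨P, PF.nil, Q₁, Q₂, (append_nil P).symm, hQ, hLP, hR, ?_⟩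
        rw [nil_append, node_append, nil_append]
        exact contains_node_mono hcα hr
      · obtain ⟨P₁, P₂, Q₁, Q₂, hP, hQ, hL, hrR, hc⟩ := (ihc L (r ++ R)).1 hb
        obtain ⟨U, V, hQ₂, hrU, hRV⟩ := contains_append_iff.1 hrR
        refine ⟨P₁, P₂, Q₁ ++ U, V, hP, ?_, hL, hRV, ?_⟩
        · rw [hQ, hQ₂, append_assoc]
        · have : Contains (c ++ r) (((P₂ ++ PF.node α PF.nil) ++ Q₁) ++ U) :=
            contains_append_mono hc hrU
          rw [append_assoc] at this
          exact (contains_of_del (Del.root c r)).trans' this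
      · obtain ⟨P₁, P₂, Q₁, Q₂, hP, hQ, hL₁, hR, hr⟩ := (ihr (L ++ PF.node c PF.nil) R).1 hb
        obtain ⟨U, V, hP₁, hLU, hcV⟩ := contains_append_iff.1 hL₁
        refine ⟨U, V ++ P₂, Q₁, Q₂, ?_, hQ, hLU, hR, ?_⟩
        · rw [hP, hP₁, append_assoc]
        · have : Contains (PF.node c PF.nil ++ r) (V ++ ((P₂ ++ PF.node α PF.nil) ++ Q₁)) :=
            contains_append_mono hcV hr
          rw [← append_assoc, ← append_assoc] at this
          rwa [node_append, nil_append] at this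
    · rintro ⟨P₁, P₂, Q₁, Q₂, hP, hQ, hLP₁, hRQ₂, hX⟩
      rcases contains_node_iff.1 hX with hcr | ⟨F₁, F₂, hF, hcF₁, hrF₂⟩
      · obtain ⟨F₁, F₂, hF, hcF₁, hrF₂⟩ := contains_append_iff.1 hcr
        rw [append_assoc] at hF
        rcases append_eq_append hF.symm with ⟨W, hW1, hW2⟩ | ⟨W, hW1, hW2⟩
        · -- P₂ = F₁ ++ W, F₂ = W ++ (a ++ Q₁) : witness goes into r
          refine Or.inr (Or.inr ((ihr (L ++ PF.node c PF.nil) R).2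
            ⟨P₁ ++ F₁, W, Q₁, Q₂, ?_, hQ, ?_, hRQ₂, ?_⟩))
          · rw [hP, hW1, ← append_assoc]
          · exact contains_append_mono hLP₁
              ((node_contains_contents c PF.nil).trans' hcF₁)
          · rw [← append_assoc] at hW2
            rw [← hW2]
            exact hrF₂
        · -- F₁ = P₂ ++ W, a ++ Q₁ = W ++ F₂
          cases W with
          | nil =>
            rw [nil_append] at hW2
            rw [append_nil] at hW1
            refine Or.inr (Or.inr ((ihr (L ++ PF.node c PF.nil) R).2
              ⟨P₁ ++ P₂, PF.nil, Q₁, Q₂, ?_, hQ, ?_, hRQ₂, ?_⟩))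
            · rw [hP, append_nil]
            · rw [hW1] at hcF₁
              exact contains_append_mono hLP₁
                ((node_contains_contents c PF.nil).trans' hcF₁)
            · show Contains r ((PF.nil ++ PF.node α PF.nil) ++ Q₁)
              rw [nil_append, hW2]
              exact hrF₂
          | node w1 w2 =>
            rw [node_append, nil_append, node_append, PF.node.injEq] at hW2
            obtain ⟨rfl, hQ₁⟩ := hW2
            refine Or.inr (Or.inl ((ihc L (r ++ R)).2
              ⟨P₁, P₂, w2, F₂ ++ Q₂, hP, ?_, hLP₁, ?_, ?_⟩))
            · rw [hQ, hQ₁, append_assoc]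
            · exact contains_append_mono hrF₂ hRQ₂
            · rw [append_assoc, node_append, nil_append]
              rw [hW1] at hcF₁
              exact hcF₁
      · cases P₂ with
        | nil =>
          rw [nil_append, node_append, nil_append, PF.node.injEq] at hF
          obtain ⟨rfl, rfl⟩ := hF
          refine Or.inl ⟨?_, ?_, hcF₁⟩
          · rw [hP, append_nil]
            exact hLP₁
          · rw [hQ]
            exact contains_append_mono hrF₂ hRQ₂
        | node p1 p2 =>
          rw [node_append, node_append, PF.node.injEq] at hF
          obtain ⟨rfl, hF₂⟩ := hF
          refine Or.inr (Or.inr ((ihr (L ++ PF.node c PF.nil) R).2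
            ⟨P₁ ++ PF.node p1 PF.nil, p2, Q₁, Q₂, ?_, hQ, ?_, hRQ₂, ?_⟩))
          · rw [hP, append_assoc, node_append, nil_append]
          · exact contains_append_mono hLP₁ (contains_node_mono hcF₁ Contains.rfl)
          · rw [← hF₂] at hrF₂
            exact hrF₂

theorem contains_iff_bad (X : PF) :
    Contains X ((P ++ PF.node α PF.nil) ++ Q) ↔ Bad P Q α PF.nil PF.nil X := by
  rw [bad_iff]
  constructor
  · intro h
    exact ⟨PF.nil, P, Q, PF.nil, rfl, (append_nil Q).symm, Contains.rfl, Contains.rfl, h⟩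
  · rintro ⟨P₁, P₂, Q₁, Q₂, hP, hQ, hL, hR, hX⟩
    have hP₁ : P₁ = PF.nil := nil_contains hL
    have hQ₂ : Q₂ = PF.nil := nil_contains hR
    rw [hP₁, nil_append] at hP
    rw [hQ₂, append_nil] at hQ
    rw [hP, hQ]
    exact hX

theorem bad_phi (g : PF → PF) (hg : ∀ c, Contains (g c) β ↔ Contains c α) :
    ∀ (X L R : PF), Bad P Q α L R X ↔ Bad P Q β L R (Phi P Q g L R X) := by
  intro X
  induction X with
  | nil => intro L R; exact Iff.rfl
  | node c r ihc ihr =>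
    intro L R
    by_cases h : Contains L P ∧ Contains (r ++ R) Q
    · rw [Phi, if_pos h]
      have hr'Q : Contains (Phi P Q g (L ++ PF.node c PF.nil) R r ++ R) Q := by
        rcases phi_Q g r (L ++ PF.node c PF.nil) R with hr | ⟨_, hr2⟩
        · rw [hr]; exact h.2
        · exact hr2
      have lhs : Bad P Q α L R (PF.node c r) ↔
          (Contains c α ∨ Bad P Q α (L ++ PF.node c PF.nil) R r) := by
        constructor
        · rintro (⟨_, _, hc⟩ | hb | hb)
          · exact Or.inl hc
          · exact Or.inl ((bad_contains c L (r ++ R) hb).trans' (atom_contains_contents α))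
          · exact Or.inr hb
        · rintro (hc | hb)
          · exact Or.inl ⟨h.1, h.2, hc⟩
          · exact Or.inr (Or.inr hb)
      have rhs : Bad P Q β L R
            (PF.node (g c) (Phi P Q g (L ++ PF.node c PF.nil) R r)) ↔
          (Contains (g c) β ∨
            Bad P Q β (L ++ PF.node (g c) PF.nil) R (Phi P Q g (L ++ PF.node c PF.nil) R r)) := by
        constructor
        · rintro (⟨_, _, hc⟩ | hb | hb)
          · exact Or.inl hc
          · exact Or.inl ((bad_contains _ L _ hb).trans' (atom_contains_contents β))
          · exact Or.inr hb
        · rintro (hc | hb)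
          · exact Or.inl ⟨h.1, hr'Q, hc⟩
          · exact Or.inr (Or.inr hb)
      rw [lhs, rhs, hg c]
      have hctx : ∀ W, Contains ((L ++ PF.node (g c) PF.nil) ++ W) P ↔
          Contains ((L ++ PF.node c PF.nil) ++ W) P := by
        intro W
        constructor <;> intro _ <;> (rw [append_assoc]; exact contains_P_ext h.1)
      rw [bad_ctxL _ R hctx, ihr (L ++ PF.node c PF.nil) R]
    · rw [Phi, if_neg h]
      have hQiff : ∀ W, Contains (W ++ (Phi P Q g (L ++ PF.node c PF.nil) R r ++ R)) Q ↔
          Contains (W ++ (r ++ R)) Q := by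
        intro W
        rcases phi_Q g r (L ++ PF.node c PF.nil) R with hr | ⟨hr1, hr2⟩
        · rw [hr]
        · constructor <;> intro _
          · exact contains_Q_ext hr1
          · exact contains_Q_ext hr2
      have hPiff : ∀ W, Contains ((L ++ PF.node (Phi P Q g L (r ++ R) c) PF.nil) ++ W) P ↔
          Contains ((L ++ PF.node c PF.nil) ++ W) P := by
        intro W
        rcases phi_P g c L (r ++ R) with hc | ⟨hc1, hc2⟩
        · rw [hc]
        · have key : ∀ d : PF, Contains (L ++ d) P →
              Contains ((L ++ PF.node d PF.nil) ++ W) P := by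
            intro d hd
            rw [append_assoc, node_append, nil_append]
            exact (contains_append_right (node_contains_contents d W) L).trans' hd
          constructor <;> intro _
          · exact key c hc1
          · exact key _ hc2
      have hnr' : ¬ (Contains L P ∧
          Contains (Phi P Q g (L ++ PF.node c PF.nil) R r ++ R) Q) := by
        rintro ⟨h1, h2⟩
        rcases phi_Q g r (L ++ PF.node c PF.nil) R with hr | ⟨hr1, _⟩
        · rw [hr] at h2; exact h ⟨h1, h2⟩
        · exact h ⟨h1, hr1⟩
      have lhs : Bad P Q α L R (PF.node c r) ↔
          (Bad P Q α L (r ++ R) c ∨ Bad P Q α (L ++ PF.node c PF.nil) R r) := by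
        constructor
        · rintro (⟨h1, h2, _⟩ | hb | hb)
          · exact absurd ⟨h1, h2⟩ h
          · exact Or.inl hb
          · exact Or.inr hb
        · rintro (hb | hb)
          · exact Or.inr (Or.inl hb)
          · exact Or.inr (Or.inr hb)
      have rhs : Bad P Q β L R (PF.node (Phi P Q g L (r ++ R) c)
            (Phi P Q g (L ++ PF.node c PF.nil) R r)) ↔
          (Bad P Q β L (Phi P Q g (L ++ PF.node c PF.nil) R r ++ R) (Phi P Q g L (r ++ R) c) ∨
            Bad P Q β (L ++ PF.node (Phi P Q g L (r ++ R) c) PF.nil) R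
              (Phi P Q g (L ++ PF.node c PF.nil) R r)) := by
        constructor
        · rintro (⟨h1, h2, _⟩ | hb | hb)
          · exact absurd ⟨h1, h2⟩ hnr'
          · exact Or.inl hb
          · exact Or.inr hb
        · rintro (hb | hb)
          · exact Or.inr (Or.inl hb)
          · exact Or.inr (Or.inr hb)
      rw [lhs, rhs]
      constructor
      · rintro (hb | hb)
        · exact Or.inl ((bad_ctxR _ L hQiff).2 ((ihc L (r ++ R)).1 hb))
        · exact Or.inr ((bad_ctxL _ R hPiff).2 ((ihr _ R).1 hb))
      · rintro (hb | hb)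
        · exact Or.inl ((ihc L (r ++ R)).2 ((bad_ctxR _ L hQiff).1 hb))
        · exact Or.inr ((ihr _ R).2 ((bad_ctxL _ R hPiff).1 hb))

end PF
namespace PF

theorem append_eq_atom {X Y α : PF} (h : X ++ Y = PF.node α PF.nil) :
    (X = PF.nil ∧ Y = PF.node α PF.nil) ∨ (X = PF.node α PF.nil ∧ Y = PF.nil) := by
  cases X with
  | nil => exact Or.inl ⟨rfl, h⟩
  | node x y =>
    rw [node_append, PF.node.injEq] at h
    obtain ⟨rfl, h2⟩ := h
    obtain ⟨rfl, rfl⟩ := append_eq_nil h2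
    exact Or.inr ⟨rfl, rfl⟩

theorem contains_atom_node {c r α : PF} :
    Contains (PF.node c r) (PF.node α PF.nil) ↔
      Contains c α ∨ Contains r (PF.node α PF.nil) := by
  constructor
  · intro h
    rcases contains_node_iff.1 h with hcr | ⟨F₁, F₂, hF, h1, h2⟩
    · obtain ⟨F₁, F₂, hF, h1, h2⟩ := contains_append_iff.1 hcr
      rcases append_eq_atom hF.symm with ⟨rfl, rfl⟩ | ⟨rfl, rfl⟩
      · exact Or.inr h2
      · exact Or.inl (h1.trans' (atom_contains_contents α))
    · rw [PF.node.injEq] at hF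
      obtain ⟨rfl, rfl⟩ := hF
      exact Or.inl h1
  · rintro (h | h)
    · exact contains_node_mono h (contains_nil r)
    · exact (node_contains_rest c r).trans' h

/-- the finset of all arch systems with `n` arches -/
def allF : ℕ → Finset PF
  | 0 => {PF.nil}
  | n + 1 =>
    (Finset.range (n + 1)).attach.biUnion fun k =>
      ((allF k.1) ×ˢ (allF (n - k.1))).image fun p => PF.node p.1 p.2
  decreasing_by
  · exact Finset.mem_range.1 k.2
  · exact Nat.lt_succ_of_le (Nat.sub_le n k.1)

theorem mem_allF : ∀ (n : ℕ) (X : PF), X ∈ allF n ↔ X.size = n := by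
  intro n
  induction n using Nat.strong_induction_on with
  | _ n ih =>
    intro X
    match n, X with
    | 0, PF.nil => simp [allF, size]
    | 0, PF.node c r => simp [allF, size]
    | n + 1, PF.nil =>
      simp only [allF, Finset.mem_biUnion, Finset.mem_attach, Finset.mem_image, true_and]
      constructor
      · rintro ⟨k, ⟨p, -, hp⟩⟩; exact absurd hp (by simp)
      · intro hs; exact absurd hs (by simp [size])
    | n + 1, PF.node c r =>
      simp only [allF, Finset.mem_biUnion, Finset.mem_attach, Finset.mem_image, true_and]
      constructor
      · rintro ⟨k, ⟨⟨c', r'⟩, hp, hnode⟩⟩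
        rw [Finset.mem_product] at hp
        rw [PF.node.injEq] at hnode
        have hk := Finset.mem_range.1 k.2
        have e1 := (ih k.1 hk c').1 hp.1
        have e2 := (ih (n - k.1) (Nat.lt_succ_of_le (Nat.sub_le n k.1)) r').1 hp.2
        rw [← hnode.1, ← hnode.2]
        show 1 + c'.size + r'.size = n + 1
        omega
      · intro hs
        have hs' : 1 + c.size + r.size = n + 1 := hs
        refine ⟨⟨c.size, Finset.mem_range.2 (by omega)⟩, ⟨(c, r), ?_, rfl⟩⟩
        rw [Finset.mem_product]
        exact ⟨(ih c.size (by omega) c).2 rfl, (ih (n - c.size) (by omega) r).2 (by omega)⟩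

/-- arch systems of size `n` with property `p`, as a finset -/
noncomputable def cntF (p : PF → Prop) (n : ℕ) : Finset PF :=
  @Finset.filter PF p (Classical.decPred p) (allF n)

/-- counting arch systems with a given property, by size -/
noncomputable def cnt (p : PF → Prop) (n : ℕ) : ℕ := (cntF p n).card

theorem mem_cntF {p : PF → Prop} {n : ℕ} {X : PF} :
    X ∈ cntF p n ↔ X.size = n ∧ p X := by
  letI : DecidablePred p := Classical.decPred p
  unfold cntF
  rw [Finset.mem_filter, mem_allF]

theorem cnt_avoid_zero {A : PF} (hA : A ≠ PF.nil) :
    cnt (fun X => ¬ Contains X A) 0 = 1 := by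
  unfold cnt
  have : cntF (fun X => ¬ Contains X A) 0 = {PF.nil} := by
    ext X
    rw [mem_cntF, Finset.mem_singleton]
    constructor
    · rintro ⟨hs, -⟩
      cases X with
      | nil => rfl
      | node c r => exact absurd hs (by simp [size])
    · rintro rfl
      exact ⟨rfl, fun hc => hA (nil_contains hc)⟩
  rw [this]
  rfl

theorem cnt_recurrence (α : PF) (n : ℕ) :
    cnt (fun X => ¬ Contains X (PF.node α PF.nil)) (n + 1) =
      ∑ k ∈ Finset.range (n + 1),
        cnt (fun c => ¬ Contains c α) k *
          cnt (fun X => ¬ Contains X (PF.node α PF.nil)) (n - k) := by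
  have hset : cntF (fun X => ¬ Contains X (PF.node α PF.nil)) (n + 1) =
      (Finset.range (n + 1)).attach.biUnion fun k =>
        ((cntF (fun c => ¬ Contains c α) k.1) ×ˢ
          (cntF (fun X => ¬ Contains X (PF.node α PF.nil)) (n - k.1))).image
            fun p => PF.node p.1 p.2 := by
    ext X
    simp only [Finset.mem_biUnion, Finset.mem_attach, Finset.mem_image, true_and]
    constructor
    · intro hX
      rw [mem_cntF] at hX
      obtain ⟨hs0, havoid⟩ := hX
      cases X with
      | nil => exact absurd hs0 (by simp [size])
      | node c r =>
        have hs : 1 + c.size + r.size = n + 1 := hs0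
        rw [contains_atom_node] at havoid
        push_neg at havoid
        refine ⟨⟨c.size, Finset.mem_range.2 (by omega)⟩, (c, r), ?_, rfl⟩
        rw [Finset.mem_product]
        exact ⟨mem_cntF.2 ⟨rfl, havoid.1⟩,
          mem_cntF.2 ⟨by show r.size = n - c.size; omega, havoid.2⟩⟩
    · rintro ⟨⟨k, hkmem⟩, ⟨c, r⟩, hmem, rfl⟩
      rw [Finset.mem_product] at hmem
      obtain ⟨h1, h2⟩ := hmem
      have e1 : c.size = k := (mem_cntF.1 h1).1
      have e2 : r.size = n - k := (mem_cntF.1 h2).1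
      have hp1 : ¬ Contains c α := (mem_cntF.1 h1).2
      have hp2 : ¬ Contains r (PF.node α PF.nil) := (mem_cntF.1 h2).2
      have hk := Finset.mem_range.1 hkmem
      rw [mem_cntF]
      constructor
      · show 1 + c.size + r.size = n + 1
        omega
      · show ¬ Contains (PF.node c r) (PF.node α PF.nil)
        rw [contains_atom_node]
        push_neg
        exact ⟨hp1, hp2⟩
  unfold cnt
  rw [hset, Finset.card_biUnion, ← Finset.sum_attach (Finset.range (n + 1))
    (fun k => (cntF (fun c => ¬ Contains c α) k).card *
      (cntF (fun X => ¬ Contains X (PF.node α PF.nil)) (n - k)).card)]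
  · refine Finset.sum_congr rfl fun k _ => ?_
    rw [Finset.card_image_of_injective _ (fun p q hpq => ?_), Finset.card_product]
    cases p; cases q
    simpa [PF.node.injEq, Prod.ext_iff] using hpq
  · intro k _ k' _ hkk
    simp only [Finset.disjoint_left]
    rintro X hX hX'
    simp only [Finset.mem_image] at hX hX'
    obtain ⟨⟨c, r⟩, hcr, rfl⟩ := hX
    obtain ⟨⟨c', r'⟩, hcr', heq⟩ := hX'
    rw [Finset.mem_product] at hcr hcr'
    have e1 : c.size = (k : ℕ) := (mem_cntF.1 hcr.1).1
    have e2 : c'.size = (k' : ℕ) := (mem_cntF.1 hcr'.1).1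
    rw [PF.node.injEq] at heq
    obtain ⟨rfl, rfl⟩ := heq
    exact hkk (Subtype.ext (e1.symm.trans e2))

theorem cnt_transfer {α β : PF}
    (h : ∀ n, cnt (fun X => ¬ Contains X (PF.node α PF.nil)) n =
      cnt (fun X => ¬ Contains X (PF.node β PF.nil)) n) :
    ∀ n, cnt (fun X => ¬ Contains X α) n = cnt (fun X => ¬ Contains X β) n := by
  intro n
  induction n using Nat.strong_induction_on with
  | _ n ih =>
    have h1 := cnt_recurrence α n
    have h2 := cnt_recurrence β n
    rw [h (n + 1)] at h1
    rw [h1] at h2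
    rw [Finset.sum_range_succ, Finset.sum_range_succ] at h2
    have hsum : ∑ k ∈ Finset.range n, cnt (fun c => ¬ Contains c α) k *
        cnt (fun X => ¬ Contains X (PF.node α PF.nil)) (n - k) =
        ∑ k ∈ Finset.range n, cnt (fun c => ¬ Contains c β) k *
        cnt (fun X => ¬ Contains X (PF.node β PF.nil)) (n - k) := by
      refine Finset.sum_congr rfl fun k hk => ?_
      rw [ih k (Finset.mem_range.1 hk), h (n - k)]
    rw [hsum] at h2
    have hz1 : cnt (fun X => ¬ Contains X (PF.node α PF.nil)) (n - n) = 1 := by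
      rw [Nat.sub_self]; exact cnt_avoid_zero (by simp)
    have hz2 : cnt (fun X => ¬ Contains X (PF.node β PF.nil)) (n - n) = 1 := by
      rw [Nat.sub_self]; exact cnt_avoid_zero (by simp)
    rw [hz1, hz2, mul_one, mul_one] at h2
    omega

theorem cnt_add (p : PF → Prop) (n : ℕ) :
    cnt p n + cnt (fun X => ¬ p X) n = (allF n).card := by
  unfold cnt
  rw [← Finset.card_union_of_disjoint]
  · congr 1
    ext X
    rw [Finset.mem_union, mem_cntF, mem_cntF, mem_allF]
    by_cases h : p X
    · simp [h]
    · simp [h]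
  · rw [Finset.disjoint_left]
    intro X h1 h2
    exact (mem_cntF.1 h2).2 (mem_cntF.1 h1).2

theorem cnt_contains_transfer {α β : PF}
    (h : ∀ n, cnt (fun X => ¬ Contains X α) n = cnt (fun X => ¬ Contains X β) n) :
    ∀ n, cnt (fun X => Contains X α) n = cnt (fun X => Contains X β) n := by
  intro n
  have h1 := cnt_add (fun X => Contains X α) n
  have h2 := cnt_add (fun X => Contains X β) n
  have h3 := h n
  omega

theorem exists_transfer_fun {α β : PF}
    (hC : ∀ n, cnt (fun X => Contains X α) n = cnt (fun X => Contains X β) n)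
    (hA : ∀ n, cnt (fun X => ¬ Contains X α) n = cnt (fun X => ¬ Contains X β) n) :
    ∃ f f' : PF → PF,
      (∀ x, (f x).size = x.size) ∧ (∀ x, Contains (f x) β ↔ Contains x α) ∧
      (∀ x, (f' x).size = x.size) ∧ (∀ x, Contains (f' x) α ↔ Contains x β) ∧
      (∀ x, f' (f x) = x) ∧ (∀ x, f (f' x) = x) := by
  classical
  have eC : ∀ n, (cntF (fun X => Contains X α) n : Finset PF) ≃
      (cntF (fun X => Contains X β) n : Finset PF) :=
    fun n => Finset.equivOfCardEq (hC n)
  have eA : ∀ n, (cntF (fun X => ¬ Contains X α) n : Finset PF) ≃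
      (cntF (fun X => ¬ Contains X β) n : Finset PF) :=
    fun n => Finset.equivOfCardEq (hA n)
  have memF : ∀ (p : PF → Prop) (x : PF), p x → x ∈ cntF p x.size :=
    fun p x h => mem_cntF.2 ⟨rfl, h⟩
  set f : PF → PF := fun x =>
    if h : Contains x α then (eC x.size ⟨x, memF _ x h⟩).1
    else (eA x.size ⟨x, memF _ x h⟩).1 with hf
  set f' : PF → PF := fun y =>
    if h : Contains y β then ((eC y.size).symm ⟨y, memF _ y h⟩).1
    else ((eA y.size).symm ⟨y, memF _ y h⟩).1 with hf'
  have hfpos : ∀ x (h : Contains x α), f x = (eC x.size ⟨x, memF _ x h⟩).1 := by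
    intro x h; simp only [hf]; rw [dif_pos h]
  have hfneg : ∀ x (h : ¬ Contains x α), f x = (eA x.size ⟨x, memF _ x h⟩).1 := by
    intro x h; simp only [hf]; rw [dif_neg h]
  have hf'pos : ∀ y (h : Contains y β), f' y = ((eC y.size).symm ⟨y, memF _ y h⟩).1 := by
    intro y h; simp only [hf']; rw [dif_pos h]
  have hf'neg : ∀ y (h : ¬ Contains y β), f' y = ((eA y.size).symm ⟨y, memF _ y h⟩).1 := by
    intro y h; simp only [hf']; rw [dif_neg h]
  have fprop : ∀ x, (f x).size = x.size ∧ (Contains (f x) β ↔ Contains x α) := by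
    intro x
    by_cases h : Contains x α
    · rw [hfpos x h]
      have := mem_cntF.1 (eC x.size ⟨x, memF _ x h⟩).2
      exact ⟨this.1, iff_of_true this.2 h⟩
    · rw [hfneg x h]
      have := mem_cntF.1 (eA x.size ⟨x, memF _ x h⟩).2
      exact ⟨this.1, iff_of_false this.2 h⟩
  have f'prop : ∀ y, (f' y).size = y.size ∧ (Contains (f' y) α ↔ Contains y β) := by
    intro y
    by_cases h : Contains y β
    · rw [hf'pos y h]
      have := mem_cntF.1 ((eC y.size).symm ⟨y, memF _ y h⟩).2
      exact ⟨this.1, iff_of_true this.2 h⟩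
    · rw [hf'neg y h]
      have := mem_cntF.1 ((eA y.size).symm ⟨y, memF _ y h⟩).2
      exact ⟨this.1, iff_of_false this.2 h⟩
  have castC : ∀ {m k : ℕ} (_ : m = k) (z : PF)
      (pf : z ∈ cntF (fun X => Contains X β) m)
      (pf' : z ∈ cntF (fun X => Contains X β) k),
      ((eC m).symm ⟨z, pf⟩).1 = ((eC k).symm ⟨z, pf'⟩).1 := by
    rintro m k rfl z pf pf'; rfl
  have castA : ∀ {m k : ℕ} (_ : m = k) (z : PF)
      (pf : z ∈ cntF (fun X => ¬ Contains X β) m)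
      (pf' : z ∈ cntF (fun X => ¬ Contains X β) k),
      ((eA m).symm ⟨z, pf⟩).1 = ((eA k).symm ⟨z, pf'⟩).1 := by
    rintro m k rfl z pf pf'; rfl
  have castC' : ∀ {m k : ℕ} (_ : m = k) (z : PF)
      (pf : z ∈ cntF (fun X => Contains X α) m)
      (pf' : z ∈ cntF (fun X => Contains X α) k),
      ((eC m) ⟨z, pf⟩).1 = ((eC k) ⟨z, pf'⟩).1 := by
    rintro m k rfl z pf pf'; rfl
  have castA' : ∀ {m k : ℕ} (_ : m = k) (z : PF)
      (pf : z ∈ cntF (fun X => ¬ Contains X α) m)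
      (pf' : z ∈ cntF (fun X => ¬ Contains X α) k),
      ((eA m) ⟨z, pf⟩).1 = ((eA k) ⟨z, pf'⟩).1 := by
    rintro m k rfl z pf pf'; rfl
  refine ⟨f, f', fun x => (fprop x).1, fun x => (fprop x).2,
    fun y => (f'prop y).1, fun y => (f'prop y).2, ?_, ?_⟩
  · intro x
    by_cases h : Contains x α
    · have hcb : Contains (f x) β := (fprop x).2.2 h
      have hsz : (f x).size = x.size := (fprop x).1
      rw [hf'pos (f x) hcb]
      rw [castC hsz (f x) _ (by rw [← hsz]; exact memF _ (f x) hcb)]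
      have hmem : f x ∈ cntF (fun X => Contains X β) x.size := by
        rw [← hsz]; exact memF _ (f x) hcb
      have heq : (⟨f x, hmem⟩ : {z // z ∈ cntF (fun X => Contains X β) x.size}) =
          eC x.size ⟨x, memF _ x h⟩ := Subtype.ext (hfpos x h)
      rw [heq, Equiv.symm_apply_apply]
    · have hcb : ¬ Contains (f x) β := fun hc => h ((fprop x).2.1 hc)
      have hsz : (f x).size = x.size := (fprop x).1
      rw [hf'neg (f x) hcb]
      rw [castA hsz (f x) _ (by rw [← hsz]; exact memF _ (f x) hcb)]
      have hmem : f x ∈ cntF (fun X => ¬ Contains X β) x.size := by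
        rw [← hsz]; exact memF _ (f x) hcb
      have heq : (⟨f x, hmem⟩ : {z // z ∈ cntF (fun X => ¬ Contains X β) x.size}) =
          eA x.size ⟨x, memF _ x h⟩ := Subtype.ext (hfneg x h)
      rw [heq, Equiv.symm_apply_apply]
  · intro y
    by_cases h : Contains y β
    · have hca : Contains (f' y) α := (f'prop y).2.2 h
      have hsz : (f' y).size = y.size := (f'prop y).1
      rw [hfpos (f' y) hca]
      rw [castC' hsz (f' y) _ (by rw [← hsz]; exact memF _ (f' y) hca)]
      have hmem : f' y ∈ cntF (fun X => Contains X α) y.size := by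
        rw [← hsz]; exact memF _ (f' y) hca
      have heq : (⟨f' y, hmem⟩ : {z // z ∈ cntF (fun X => Contains X α) y.size}) =
          (eC y.size).symm ⟨y, memF _ y h⟩ := Subtype.ext (hf'pos y h)
      rw [heq, Equiv.apply_symm_apply]
    · have hca : ¬ Contains (f' y) α := fun hc => h ((f'prop y).2.1 hc)
      have hsz : (f' y).size = y.size := (f'prop y).1
      rw [hfneg (f' y) hca]
      rw [castA' hsz (f' y) _ (by rw [← hsz]; exact memF _ (f' y) hca)]
      have hmem : f' y ∈ cntF (fun X => ¬ Contains X α) y.size := by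
        rw [← hsz]; exact memF _ (f' y) hca
      have heq : (⟨f' y, hmem⟩ : {z // z ∈ cntF (fun X => ¬ Contains X α) y.size}) =
          (eA y.size).symm ⟨y, memF _ y h⟩ := Subtype.ext (hf'neg y h)
      rw [heq, Equiv.apply_symm_apply]

end PF
/-- If atoms `a` and `b` are Wilf-equivalent, then so are `PaQ` and `PbQ`. -/
theorem wilfEq_subst (a b : PF) (ha : a.IsAtom) (hb : b.IsAtom)
    (h : PF.WilfEq a b) (P Q : PF) :
    PF.WilfEq (P ++ a ++ Q) (P ++ b ++ Q) := by
  obtain ⟨α, rfl⟩ := ha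
  obtain ⟨β, rfl⟩ := hb
  have hset : ∀ (A : PF) (n : ℕ),
      {X | X ∈ PF.Av A ∧ X.size = n} = ↑(PF.cntF (fun X => ¬ PF.Contains X A) n) := by
    intro A n
    ext X
    rw [Set.mem_setOf_eq, Finset.mem_coe, PF.mem_cntF]
    constructor
    · rintro ⟨h1, h2⟩; exact ⟨h2, h1⟩
    · rintro ⟨h1, h2⟩; exact ⟨h2, h1⟩
  have hcnt : ∀ n, PF.cnt (fun X => ¬ PF.Contains X (PF.node α PF.nil)) n =
      PF.cnt (fun X => ¬ PF.Contains X (PF.node β PF.nil)) n := by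
    intro n
    have hn := h n
    rw [hset (PF.node α PF.nil) n, hset (PF.node β PF.nil) n,
      Set.ncard_coe_finset, Set.ncard_coe_finset] at hn
    exact hn
  have hA := PF.cnt_transfer hcnt
  have hC := PF.cnt_contains_transfer hA
  obtain ⟨f, f', hfs, hfc, hf's, hf'c, hff', hf'f⟩ := PF.exists_transfer_fun hC hA
  intro n
  set Φ : PF → PF := PF.Phi P Q f PF.nil PF.nil with hΦ
  set Ψ : PF → PF := PF.Phi P Q f' PF.nil PF.nil with hΨ
  have hΨΦ : ∀ X, Ψ (Φ X) = X := fun X => PF.phi_phi f f' hff' X PF.nil PF.nil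
  have hΦΨ : ∀ Y, Φ (Ψ Y) = Y := fun Y => PF.phi_phi f' f hf'f Y PF.nil PF.nil
  have hsz : ∀ X, (Φ X).size = X.size := fun X => PF.phi_size hfs X PF.nil PF.nil
  have hsz' : ∀ Y, (Ψ Y).size = Y.size := fun Y => PF.phi_size hf's Y PF.nil PF.nil
  have htr : ∀ X, PF.Bad P Q α PF.nil PF.nil X ↔ PF.Bad P Q β PF.nil PF.nil (Φ X) :=
    fun X => PF.bad_phi f hfc X PF.nil PF.nil
  have himg : Φ '' {X | X ∈ PF.Av (P ++ PF.node α PF.nil ++ Q) ∧ X.size = n} =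
      {Y | Y ∈ PF.Av (P ++ PF.node β PF.nil ++ Q) ∧ Y.size = n} := by
    ext Y
    constructor
    · rintro ⟨X, ⟨hav, hsz0⟩, rfl⟩
      have hav0 : ¬ PF.Bad P Q α PF.nil PF.nil X := by
        intro hbad
        exact hav ((PF.contains_iff_bad X).2 hbad)
      refine ⟨?_, by rw [hsz X]; exact hsz0⟩
      show ¬ PF.Contains (Φ X) ((P ++ PF.node β PF.nil) ++ Q)
      rw [PF.contains_iff_bad]
      intro hbad
      exact hav0 ((htr X).2 hbad)
    · rintro ⟨hav, hsz0⟩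
      refine ⟨Ψ Y, ⟨?_, by rw [hsz' Y]; exact hsz0⟩, hΦΨ Y⟩
      show ¬ PF.Contains (Ψ Y) ((P ++ PF.node α PF.nil) ++ Q)
      rw [PF.contains_iff_bad]
      intro hbad
      have hb2 := (htr (Ψ Y)).1 hbad
      rw [hΦΨ Y] at hb2
      exact hav ((PF.contains_iff_bad Y).2 hb2)
  have hinj : Function.Injective Φ := Function.LeftInverse.injective hΨΦ
  rw [← himg, Set.ncard_image_of_injective _ hinj]
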